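/- In the universal enveloping algebra U(𝔫𝔴) of the Nappi–Witten Lie algebra, the quadratic Casimir element C := (1/2)(ι(J⁺)ι(J⁻) + ι(J⁻)ι(J⁺)) + ι(J)ι(T) + ι(T)ι(J) commutes with ι(x) for every x ∈ 𝔫𝔴, where ι : 𝔫𝔴 → U(𝔫𝔴) is the canonical embedding; hence C is central in U(𝔫𝔴). -/

import Mathlib

/-!
The Nappi–Witten Lie algebra `𝔫𝔴` with basis `J⁺, J⁻, J, T` (coordinates `0,1,2,3`),
brackets `[J⁺,J⁻] = 2iT`, `[J,J⁺] = iJ⁺`, `[J,J⁻] = −iJ⁻`, `T` central, together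
with its universal enveloping algebra `U(𝔫𝔴)` and the canonical embedding `ι`.
-/

/-- Elements of 𝔫𝔴 as coordinate vectors `(x 0)·J⁺ + (x 1)·J⁻ + (x 2)·J + (x 3)·T`. -/
def NW : Type := Fin 4 → ℂ

instance : AddCommGroup NW := inferInstanceAs (AddCommGroup (Fin 4 → ℂ))
noncomputable instance : Module ℂ NW := inferInstanceAs (Module ℂ (Fin 4 → ℂ))

namespace NW

/-- The coordinates of an element of 𝔫𝔴. -/
def coord (x : NW) : Fin 4 → ℂ := x

lemma add_apply' (x y : NW) (i : Fin 4) : coord (x + y) i = coord x i + coord y i := rfl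
lemma smul_apply' (c : ℂ) (x : NW) (i : Fin 4) : coord (c • x) i = c * coord x i := rfl
lemma zero_apply' (i : Fin 4) : coord (0 : NW) i = 0 := rfl
lemma ext' (x y : NW) (h : ∀ i, coord x i = coord y i) : x = y := funext h

/-- The Lie bracket of 𝔫𝔴 in coordinates. -/
def bkt (x y : NW) : NW :=
  (![Complex.I * (coord x 2 * coord y 0 - coord x 0 * coord y 2),
     -Complex.I * (coord x 2 * coord y 1 - coord x 1 * coord y 2),
     0,
     2 * Complex.I * (coord x 0 * coord y 1 - coord x 1 * coord y 0)] : Fin 4 → ℂ)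

lemma bkt_apply (x y : NW) (i : Fin 4) :
    coord (bkt x y) i =
      (![Complex.I * (coord x 2 * coord y 0 - coord x 0 * coord y 2),
         -Complex.I * (coord x 2 * coord y 1 - coord x 1 * coord y 2),
         0,
         2 * Complex.I * (coord x 0 * coord y 1 - coord x 1 * coord y 0)] : Fin 4 → ℂ) i := rfl

instance : LieRing NW where
  bracket := bkt
  add_lie x y z := by
    apply ext'; intro i
    fin_cases i <;> simp [bkt_apply, add_apply'] <;> ring
  lie_add x y z := by
    apply ext'; intro i
    fin_cases i <;> simp [bkt_apply, add_apply'] <;> ring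
  lie_self x := by
    apply ext'; intro i
    fin_cases i <;> simp [bkt_apply, zero_apply'] <;> ring
  leibniz_lie x y z := by
    apply ext'; intro i
    fin_cases i <;> simp [bkt_apply, add_apply'] <;> ring

lemma lie_def (x y : NW) : ⁅x, y⁆ = bkt x y := rfl

noncomputable instance : LieAlgebra ℂ NW where
  lie_smul c x y := by
    apply ext'; intro i
    fin_cases i <;> simp [lie_def, bkt_apply, smul_apply'] <;> ring

/-- `J⁺`. -/
def Jp : NW := (![1, 0, 0, 0] : Fin 4 → ℂ)
/-- `J⁻`. -/
def Jm : NW := (![0, 1, 0, 0] : Fin 4 → ℂ)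
/-- `J`. -/
def J : NW := (![0, 0, 1, 0] : Fin 4 → ℂ)
/-- `T`. -/
def T : NW := (![0, 0, 0, 1] : Fin 4 → ℂ)

end NW

attribute [local instance] LieRing.ofAssociativeRing

/-- The canonical embedding `ι : 𝔫𝔴 → U(𝔫𝔴)`. -/
noncomputable def iota : NW →ₗ⁅ℂ⁆ UniversalEnvelopingAlgebra ℂ NW :=
  UniversalEnvelopingAlgebra.ι ℂ

lemma nw_add_apply (a b : NW) (i : Fin 4) : (a + b) i = a i + b i := rfl
lemma nw_smul_apply (c : ℂ) (a : NW) (i : Fin 4) : (c • a) i = c * a i := rfl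
lemma nw_neg_apply (a : NW) (i : Fin 4) : (-a) i = -(a i) := rfl
lemma nw_zero_apply (i : Fin 4) : (0 : NW) i = 0 := rfl

/-- The quadratic Casimir element
`C = (1/2)(ι(J⁺)ι(J⁻) + ι(J⁻)ι(J⁺)) + ι(J)ι(T) + ι(T)ι(J)` of `U(𝔫𝔴)`. -/
noncomputable def casimir : UniversalEnvelopingAlgebra ℂ NW :=
  (1 / 2 : ℂ) • (iota NW.Jp * iota NW.Jm + iota NW.Jm * iota NW.Jp)
    + iota NW.J * iota NW.T + iota NW.T * iota NW.J

section Aux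
open NW

lemma nw_decomp (x : NW) : x = x 0 • Jp + x 1 • Jm + x 2 • J + x 3 • T := by
  apply NW.ext'; intro i
  simp only [NW.lie_def, NW.bkt_apply, NW.add_apply', NW.smul_apply', NW.zero_apply']
  fin_cases i <;> simp [nw_add_apply, nw_smul_apply, NW.coord, Jp, Jm, J, T]

lemma bkt_JpJm : ⁅Jp, Jm⁆ = (2 * Complex.I) • T := by
  apply NW.ext'; intro i
  simp only [NW.lie_def, NW.bkt_apply, NW.add_apply', NW.smul_apply', NW.zero_apply']
  fin_cases i <;> simp [NW.lie_def, NW.bkt, nw_smul_apply, NW.coord, Jp, Jm, T]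

lemma bkt_JmJp : ⁅Jm, Jp⁆ = (-(2 * Complex.I)) • T := by
  apply NW.ext'; intro i
  simp only [NW.lie_def, NW.bkt_apply, NW.add_apply', NW.smul_apply', NW.zero_apply']
  fin_cases i <;> simp [NW.lie_def, NW.bkt, nw_smul_apply, nw_neg_apply, NW.coord, Jp, Jm, T]

lemma bkt_JJp : ⁅J, Jp⁆ = Complex.I • Jp := by
  apply NW.ext'; intro i
  simp only [NW.lie_def, NW.bkt_apply, NW.add_apply', NW.smul_apply', NW.zero_apply']
  fin_cases i <;> simp [NW.lie_def, NW.bkt, nw_smul_apply, NW.coord, Jp, J]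

lemma bkt_JpJ : ⁅Jp, J⁆ = (-Complex.I) • Jp := by
  apply NW.ext'; intro i
  simp only [NW.lie_def, NW.bkt_apply, NW.add_apply', NW.smul_apply', NW.zero_apply']
  fin_cases i <;> simp [NW.lie_def, NW.bkt, nw_smul_apply, nw_neg_apply, NW.coord, Jp, J]

lemma bkt_JJm : ⁅J, Jm⁆ = (-Complex.I) • Jm := by
  apply NW.ext'; intro i
  simp only [NW.lie_def, NW.bkt_apply, NW.add_apply', NW.smul_apply', NW.zero_apply']
  fin_cases i <;> simp [NW.lie_def, NW.bkt, nw_smul_apply, nw_neg_apply, NW.coord, Jm, J]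

lemma bkt_JmJ : ⁅Jm, J⁆ = Complex.I • Jm := by
  apply NW.ext'; intro i
  simp only [NW.lie_def, NW.bkt_apply, NW.add_apply', NW.smul_apply', NW.zero_apply']
  fin_cases i <;> simp [NW.lie_def, NW.bkt, nw_smul_apply, NW.coord, Jm, J]

lemma bkt_T_left (x : NW) : ⁅T, x⁆ = 0 := by
  apply NW.ext'; intro i
  simp only [NW.lie_def, NW.bkt_apply, NW.add_apply', NW.smul_apply', NW.zero_apply']
  fin_cases i <;> simp [NW.lie_def, NW.bkt, nw_zero_apply, NW.coord, T]

lemma bkt_T_right (x : NW) : ⁅x, T⁆ = 0 := by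
  apply NW.ext'; intro i
  simp only [NW.lie_def, NW.bkt_apply, NW.add_apply', NW.smul_apply', NW.zero_apply']
  fin_cases i <;> simp [NW.lie_def, NW.bkt, nw_zero_apply, NW.coord, T]

lemma lie_mul' {A : Type*} [Ring A] (a b c : A) :
    ⁅a, b * c⁆ = ⁅a, b⁆ * c + b * ⁅a, c⁆ := by
  simp only [Ring.lie_def]; noncomm_ring

lemma lie_casimir_basis (b : NW) (hb : b = Jp ∨ b = Jm ∨ b = J ∨ b = T) :
    ⁅iota b, casimir⁆ = 0 := by
  have expand : ⁅iota b, casimir⁆ =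
      (1 / 2 : ℂ) • (⁅iota b, iota Jp⁆ * iota Jm + iota Jp * ⁅iota b, iota Jm⁆
        + ⁅iota b, iota Jm⁆ * iota Jp + iota Jm * ⁅iota b, iota Jp⁆)
      + (⁅iota b, iota J⁆ * iota T + iota J * ⁅iota b, iota T⁆)
      + (⁅iota b, iota T⁆ * iota J + iota T * ⁅iota b, iota J⁆) := by
    simp only [casimir, lie_add, lie_smul, lie_mul']
    abel
  have hmap : ∀ u v : NW, ⁅iota u, iota v⁆ = iota ⁅u, v⁆ := fun u v =>
    (LieHom.map_lie iota u v).symm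
  rcases hb with rfl | rfl | rfl | rfl <;>
    · rw [expand]
      simp only [hmap, bkt_JpJm, bkt_JmJp, bkt_JJp, bkt_JpJ, bkt_JJm, bkt_JmJ,
        bkt_T_left, bkt_T_right, lie_self, map_smul, map_zero,
        smul_mul_assoc, mul_smul_comm, zero_mul, mul_zero, add_zero, zero_add,
        smul_zero, smul_add, smul_smul, neg_smul, map_neg, neg_mul, mul_neg]
      try module

lemma lie_casimir_eq_zero (x : NW) : ⁅iota x, casimir⁆ = 0 := by
  rw [nw_decomp x]
  simp only [map_add, map_smul, add_lie, smul_lie,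
    lie_casimir_basis Jp (Or.inl rfl), lie_casimir_basis Jm (Or.inr (Or.inl rfl)),
    lie_casimir_basis J (Or.inr (Or.inr (Or.inl rfl))),
    lie_casimir_basis T (Or.inr (Or.inr (Or.inr rfl))),
    smul_zero, add_zero]

end Aux

/-- The quadratic Casimir element commutes with `ι(x)` for every `x ∈ 𝔫𝔴`;
hence it is central in `U(𝔫𝔴)`. -/
theorem casimir_central :
    (∀ x : NW, casimir * iota x = iota x * casimir) ∧
    (∀ u : UniversalEnvelopingAlgebra ℂ NW, casimir * u = u * casimir) := by
  have h1 : ∀ x : NW, casimir * iota x = iota x * casimir := by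
    intro x
    have h := lie_casimir_eq_zero x
    rw [Ring.lie_def, sub_eq_zero] at h
    exact h.symm
  refine ⟨h1, ?_⟩
  intro u
  obtain ⟨q, rfl⟩ : ∃ q, UniversalEnvelopingAlgebra.mkAlgHom ℂ NW q = u := RingCon.mkₐ_surjective (α := ℂ) (UniversalEnvelopingAlgebra.ringCon ℂ NW) u
  induction q using TensorAlgebra.induction with
  | algebraMap r =>
      rw [AlgHom.commutes]
      exact (Algebra.commutes r casimir).symm
  | ι x =>
      have hx : UniversalEnvelopingAlgebra.mkAlgHom ℂ NW
          (TensorAlgebra.ι ℂ x) = iota x := rfl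
      rw [hx]; exact h1 x
  | add a b ha hb => rw [map_add, mul_add, add_mul, ha, hb]
  | mul a b ha hb => rw [map_mul, ← mul_assoc, ha, mul_assoc, hb, mul_assoc]
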